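/- If L is a strongly Z-graded ring, then any projective right L-module is projective when considered as a right L_0-module by restriction of scalars. -/

import Mathlib

open Pointwise MulOpposite

/-- A `ℤ`-graded ring is *strongly graded* if `L_k · L_ℓ = L_{k+ℓ}` for all `k, ℓ`. -/
def IsStronglyGraded {L : Type*} [Ring L] (𝒜 : ℤ → AddSubgroup L) : Prop :=
  ∀ k l : ℤ, 𝒜 k * 𝒜 l = 𝒜 (k + l)

section
variable {L : Type*} [Ring L] (𝒜 : ℤ → AddSubgroup L) [GradedRing 𝒜]

/-- The inclusion of the degree-zero subring `L_0` into `L`, as a ring homomorphism. -/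
def gradeZeroInclusion : (↥(𝒜 0)) →+* L where
  toFun x := (x : L)
  map_one' := rfl
  map_mul' := fun _ _ => rfl
  map_zero' := rfl
  map_add' := fun _ _ => rfl

/-- Elements of a product of additive subgroups are finite sums of products. -/
lemma exists_multiset_of_mem_mul {A B : AddSubgroup L} {a : L} (ha : a ∈ A * B) :
    ∃ m : Multiset (A × B), (m.map fun p => (p.1 : L) * (p.2 : L)).sum = a := by
  rw [← AddSubgroup.mem_toAddSubmonoid, AddSubgroup.mul_toAddSubmonoid] at ha
  refine AddSubmonoid.mul_induction_on ha ?_ ?_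
  · intro x hx y hy; exact ⟨{(⟨x, hx⟩, ⟨y, hy⟩)}, by simp⟩
  · rintro x y ⟨mx, hx⟩ ⟨my, hy⟩; exact ⟨mx + my, by simp [hx, hy]⟩

/-- Evaluation of a multiset sum of additive monoid homs. -/
lemma multiset_sum_apply' {A B : Type*} [AddCommMonoid A] [AddCommMonoid B]
    (S : Multiset (A →+ B)) (x : A) : S.sum x = (S.map (fun φ => φ x)).sum := by
  induction S using Multiset.induction with
  | empty => simp
  | cons φ S ih => simp [ih]

/-- Scalar multiplication distributes over multiset sums. -/
lemma smul_multiset_sum' {R A : Type*} [Semiring R] [AddCommMonoid A] [Module R A]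
    (r : R) (S : Multiset A) : r • S.sum = (S.map (fun a => r • a)).sum := by
  induction S using Multiset.induction with
  | empty => simp
  | cons a S ih => simp [ih]

/-- Transitivity of projectivity along a scalar tower. -/
theorem Module.Projective.trans' {R S M : Type*} [Semiring R] [Semiring S]
    [AddCommMonoid M] [Module S M] [Module R S] [Module R M]
    [IsScalarTower R S S] [IsScalarTower R S M]
    [Module.Projective R S] [Module.Projective S M] : Module.Projective R M := by
  classical
  obtain ⟨sM, hsM⟩ := ‹Module.Projective S M›
  haveI : Module.Projective R (M →₀ S) :=
    Module.Projective.of_equiv (finsuppLequivDFinsupp (ι := M) (M := S) R).symm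
  exact Module.Projective.of_split (sM.restrictScalars R)
    ((Finsupp.linearCombination S id).restrictScalars R) (by ext m; simpa using hsM m)

set_option maxHeartbeats 2000000 in
/-- `Lᵐᵒᵖ` is projective as a module over `(L₀)ᵐᵒᵖ` when `L` is strongly graded. -/
theorem projective_op_of_stronglyGraded (h : IsStronglyGraded 𝒜) :
    letI : Module (↥(𝒜 0))ᵐᵒᵖ Lᵐᵒᵖ := Module.compHom _ (RingHom.op (gradeZeroInclusion 𝒜))
    Module.Projective (↥(𝒜 0))ᵐᵒᵖ Lᵐᵒᵖ := by
  letI : Module (↥(𝒜 0))ᵐᵒᵖ Lᵐᵒᵖ := Module.compHom _ (RingHom.op (gradeZeroInclusion 𝒜))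
  -- For each `k`, write `1 = ∑ xᵢ yᵢ` with `xᵢ ∈ 𝒜 k`, `yᵢ ∈ 𝒜 (-k)`.
  have hone : ∀ k : ℤ, (1 : L) ∈ 𝒜 k * 𝒜 (-k) := fun k => by
    rw [h k (-k), add_neg_cancel]; exact SetLike.one_mem_graded 𝒜
  choose c hc using fun k => exists_multiset_of_mem_mul (hone k)
  have hmem : ∀ {k : ℤ} (y : 𝒜 (-k)) (a : 𝒜 k), (y : L) * (a : L) ∈ 𝒜 0 := by
    intro k y a
    have := SetLike.mul_mem_graded y.2 a.2
    rwa [neg_add_cancel] at this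
  -- the basic building blocks of the section
  let F : ∀ k : ℤ, (𝒜 k × 𝒜 (-k)) → (𝒜 k →+ (Lᵐᵒᵖ →₀ (↥(𝒜 0))ᵐᵒᵖ)) := fun k p =>
    { toFun := fun a => Finsupp.single (op (p.1 : L)) (op ⟨(p.2 : L) * a, hmem p.2 a⟩)
      map_zero' := by
        convert Finsupp.single_zero (op ((p.1 : L)))
        simp only [ZeroMemClass.coe_zero, mul_zero]
        rfl
      map_add' := fun a b => by
        rw [← Finsupp.single_add, ← op_add]
        ext
        simp [mul_add] }
  let T : ∀ k : ℤ, (𝒜 k →+ (Lᵐᵒᵖ →₀ (↥(𝒜 0))ᵐᵒᵖ)) := fun k => ((c k).map (F k)).sum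
  -- the section as an additive monoid hom
  let σ₀ : Lᵐᵒᵖ →+ (Lᵐᵒᵖ →₀ (↥(𝒜 0))ᵐᵒᵖ) :=
    (DFinsupp.sumAddHom T).comp
      (((DirectSum.decomposeAddEquiv 𝒜).toAddMonoidHom).comp
        (opAddEquiv (α := L)).symm.toAddMonoidHom)
  have σkey : ∀ {k : ℤ} (a : 𝒜 k), σ₀ (op (a : L)) = T k a := by
    intro k a
    show DFinsupp.sumAddHom T (DirectSum.decomposeAddEquiv 𝒜 (unop (op (a : L)))) = T k a
    rw [unop_op, DirectSum.decomposeAddEquiv_apply, DirectSum.decompose_of_mem 𝒜 a.2]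
    show DFinsupp.sumAddHom T (DFinsupp.single k ⟨(a : L), a.2⟩) = T k a
    rw [DFinsupp.sumAddHom_single]
  -- `σ₀` commutes with the `(L₀)ᵐᵒᵖ`-action
  have σsmul : ∀ (r : (↥(𝒜 0))ᵐᵒᵖ) (x : Lᵐᵒᵖ), σ₀ (r • x) = r • σ₀ x := by
    intro r x
    rw [← op_unop x]
    generalize unop x = a
    refine DirectSum.Decomposition.inductionOn 𝒜 (motive := fun a => σ₀ (r • op a) = r • σ₀ (op a)) ?_ ?_ ?_ a
    · simp only [op_zero, smul_zero, map_zero]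
    · intro k m
      have hr : r • op (m : L) = op ((m : L) * ((unop r : 𝒜 0) : L)) := rfl
      have hmc : (m : L) * ((unop r : 𝒜 0) : L) ∈ 𝒜 k := by
        have := SetLike.mul_mem_graded m.2 (unop r).2
        rwa [add_zero] at this
      rw [hr, σkey (k := k) ⟨_, hmc⟩, σkey m]
      show (((c k).map (F k)).sum) _ = r • (((c k).map (F k)).sum) _
      rw [multiset_sum_apply', multiset_sum_apply']
      refine Eq.trans ?_ (smul_multiset_sum' r _).symm
      rw [Multiset.map_map, Multiset.map_map, Multiset.map_map]
      congr 1
      refine Multiset.map_congr rfl ?_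
      intro p _
      show Finsupp.single (op (p.1 : L)) _ = r • Finsupp.single (op (p.1 : L)) _
      rw [Finsupp.smul_single]
      congr 1
      show op (⟨(p.2 : L) * ((m : L) * _), _⟩ : 𝒜 0) = r • op (⟨(p.2 : L) * (m : L), _⟩ : 𝒜 0)
      have : r • op (⟨(p.2 : L) * (m : L), hmem p.2 m⟩ : 𝒜 0)
          = op ((⟨(p.2 : L) * (m : L), hmem p.2 m⟩ : 𝒜 0) * (unop r)) := rfl
      rw [this]
      congr 1
      ext
      show (p.2 : L) * ((m : L) * ((unop r : 𝒜 0) : L))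
        = ((p.2 : L) * (m : L)) * ((unop r : 𝒜 0) : L)
      rw [mul_assoc]
    · intro x y hx hy
      have h1 : r • (op x + op y) = r • op x + r • op y := smul_add r (op x) (op y)
      have h2 : r • (σ₀ (op x) + σ₀ (op y)) = r • σ₀ (op x) + r • σ₀ (op y) := by
        ext q
        simp only [Finsupp.smul_apply, Finsupp.add_apply]
        exact smul_add r ((σ₀ (op x)) q) ((σ₀ (op y)) q)
      rw [op_add, h1, map_add, hx, hy, map_add, h2]
  -- the section as a linear map
  let σ : Lᵐᵒᵖ →ₗ[(↥(𝒜 0))ᵐᵒᵖ] (Lᵐᵒᵖ →₀ (↥(𝒜 0))ᵐᵒᵖ) :=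
    { toFun := σ₀, map_add' := σ₀.map_add, map_smul' := σsmul }
  refine ⟨σ, ?_⟩
  intro x
  show Finsupp.linearCombination _ id (σ₀ x) = x
  rw [← op_unop x]
  generalize unop x = a
  refine DirectSum.Decomposition.inductionOn 𝒜
    (motive := fun a => Finsupp.linearCombination _ id (σ₀ (op a)) = op a) ?_ ?_ ?_ a
  · simp only [op_zero, map_zero]
  · intro k m
    rw [σkey m]
    show Finsupp.linearCombination _ id ((((c k).map (F k)).sum) m) = op (m : L)
    rw [multiset_sum_apply', Multiset.map_map, map_multiset_sum, Multiset.map_map]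
    have : ∀ p : 𝒜 k × 𝒜 (-k),
        Finsupp.linearCombination (↥(𝒜 0))ᵐᵒᵖ id (F k p m) = op ((p.1 : L) * ((p.2 : L) * m)) := by
      intro p
      show Finsupp.linearCombination _ id
        (Finsupp.single (op (p.1 : L)) (op (⟨(p.2 : L) * m, hmem p.2 m⟩ : 𝒜 0)))
        = op ((p.1 : L) * ((p.2 : L) * m))
      rw [Finsupp.linearCombination_single, id]
      rfl
    rw [Multiset.map_congr rfl (fun p _ => by
      show Finsupp.linearCombination _ id (F k p m) = op ((p.1 : L) * (p.2 : L) * m)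
      rw [this p, mul_assoc])]
    have hop := map_multiset_sum (opAddEquiv (α := L)).toAddMonoidHom
      ((c k).map (fun p : 𝒜 k × 𝒜 (-k) => (p.1 : L) * (p.2 : L) * m))
    simp only [Multiset.map_map, Function.comp_def, AddEquiv.coe_toAddMonoidHom,
      opAddEquiv_apply] at hop
    rw [← hop, Multiset.sum_map_mul_right, hc k, one_mul]
  · intro x y hx hy
    rw [op_add, map_add, map_add, hx, hy]

/-- If `L` is a strongly `ℤ`-graded ring, then any projective right `L`-module is
projective as a right `L_0`-module via restriction of scalars along `L_0 ⊆ L`. -/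
theorem projective_restrict_gradeZero (h : IsStronglyGraded 𝒜)
    (M : Type*) [AddCommGroup M] [Module Lᵐᵒᵖ M] [Module.Projective Lᵐᵒᵖ M] :
    letI : Module (↥(𝒜 0))ᵐᵒᵖ M := Module.compHom M (RingHom.op (gradeZeroInclusion 𝒜))
    Module.Projective (↥(𝒜 0))ᵐᵒᵖ M := by
  letI : Module (↥(𝒜 0))ᵐᵒᵖ M := Module.compHom M (RingHom.op (gradeZeroInclusion 𝒜))
  letI : Module (↥(𝒜 0))ᵐᵒᵖ Lᵐᵒᵖ := Module.compHom _ (RingHom.op (gradeZeroInclusion 𝒜))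
  haveI : IsScalarTower (↥(𝒜 0))ᵐᵒᵖ Lᵐᵒᵖ Lᵐᵒᵖ :=
    ⟨fun r s x => mul_assoc ((RingHom.op (gradeZeroInclusion 𝒜)) r) s x⟩
  haveI : IsScalarTower (↥(𝒜 0))ᵐᵒᵖ Lᵐᵒᵖ M :=
    ⟨fun r s m => mul_smul ((RingHom.op (gradeZeroInclusion 𝒜)) r) s m⟩
  haveI : Module.Projective (↥(𝒜 0))ᵐᵒᵖ Lᵐᵒᵖ := projective_op_of_stronglyGraded 𝒜 h
  exact Module.Projective.trans' (S := Lᵐᵒᵖ)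

end
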